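/- Let A be a vector space over ℂ with a bilinear product, q a fixed complex number, and define on L(A) = A ⊗ ℂ[t,t⁻¹] the bracket [a[m], b[n]] = (m+q)(ab)[m+n] − (n+q)(ba)[m+n], where a[m] := a ⊗ t^{m+1}. Then this bracket satisfies the Jacobi identity (together with antisymmetry, making L(A) a Lie algebra) if and only if A is a Novikov algebra, i.e. (ab)c − a(bc) = (ba)c − b(ac) and (ab)c = (ac)b for all a, b, c ∈ A. -/

import Mathlib

/-- The affinization bracket on `L(A) = A ⊗ ℂ[t,t⁻¹]` (modelled as finitely
supported functions `ℤ →₀ A`, with `a[m] = single m a`):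
`[a[m], b[n]] = (m+q)(ab)[m+n] − (n+q)(ba)[m+n]`. -/
noncomputable def affBracket {A : Type*} [AddCommGroup A] [Module ℂ A]
    (q : ℂ) (mul : A →ₗ[ℂ] A →ₗ[ℂ] A) (f g : ℤ →₀ A) : ℤ →₀ A :=
  f.sum fun m a => g.sum fun n b =>
    Finsupp.single (m + n) ((((m : ℂ) + q) • mul a b) - (((n : ℂ) + q) • mul b a))

section Aux

variable {A : Type*} [AddCommGroup A] [Module ℂ A] (q : ℂ) (mul : A →ₗ[ℂ] A →ₗ[ℂ] A)

lemma aff_single_single (m n : ℤ) (a b : A) :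
    affBracket q mul (Finsupp.single m a) (Finsupp.single n b) =
      Finsupp.single (m + n) ((((m : ℂ) + q) • mul a b) - (((n : ℂ) + q) • mul b a)) := by
  unfold affBracket
  rw [Finsupp.sum_single_index, Finsupp.sum_single_index] <;> simp

lemma aff_zero_left (g : ℤ →₀ A) : affBracket q mul 0 g = 0 := by simp [affBracket]

lemma aff_zero_right (f : ℤ →₀ A) : affBracket q mul f 0 = 0 := by simp [affBracket]

lemma aff_add_left (f₁ f₂ g : ℤ →₀ A) :
    affBracket q mul (f₁ + f₂) g = affBracket q mul f₁ g + affBracket q mul f₂ g := by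
  unfold affBracket
  apply Finsupp.sum_add_index'
  · intro m; simp
  · intro m a₁ a₂
    rw [← Finsupp.sum_add]
    refine Finsupp.sum_congr fun n _ => ?_
    rw [← Finsupp.single_add]
    congr 1
    simp only [map_add, LinearMap.add_apply]
    module

lemma aff_add_right (f g₁ g₂ : ℤ →₀ A) :
    affBracket q mul f (g₁ + g₂) = affBracket q mul f g₁ + affBracket q mul f g₂ := by
  unfold affBracket
  rw [← Finsupp.sum_add]
  refine Finsupp.sum_congr fun m _ => ?_
  apply Finsupp.sum_add_index'
  · intro n; simp
  · intro n b₁ b₂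
    rw [← Finsupp.single_add]
    congr 1
    simp only [map_add, LinearMap.add_apply]
    module

/-- The value of the cyclic Jacobi sum on basis vectors. -/
noncomputable def Jval (m n p : ℂ) (a b c : A) : A :=
  ((m+q)*(n+q)) • mul a (mul b c) - ((m+q)*(p+q)) • mul a (mul c b)
  - ((n+p+q)*(n+q)) • mul (mul b c) a + ((n+p+q)*(p+q)) • mul (mul c b) a
  + ((p+q)*(m+q)) • mul c (mul a b) - ((p+q)*(n+q)) • mul c (mul b a)
  - ((m+n+q)*(m+q)) • mul (mul a b) c + ((m+n+q)*(n+q)) • mul (mul b a) c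
  + ((n+q)*(p+q)) • mul b (mul c a) - ((n+q)*(m+q)) • mul b (mul a c)
  - ((p+m+q)*(p+q)) • mul (mul c a) b + ((p+m+q)*(m+q)) • mul (mul a c) b

lemma aff_triple (m n p : ℤ) (a b c : A) :
    affBracket q mul (Finsupp.single m a)
        (affBracket q mul (Finsupp.single n b) (Finsupp.single p c)) +
      affBracket q mul (Finsupp.single p c)
        (affBracket q mul (Finsupp.single m a) (Finsupp.single n b)) +
      affBracket q mul (Finsupp.single n b)
        (affBracket q mul (Finsupp.single p c) (Finsupp.single m a)) =
      Finsupp.single (m + n + p) (Jval q mul (m : ℂ) (n : ℂ) (p : ℂ) a b c) := by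
  rw [aff_single_single, aff_single_single, aff_single_single, aff_single_single,
    aff_single_single, aff_single_single]
  rw [show m + (n + p) = m + n + p from by ring, show p + (m + n) = m + n + p from by ring,
    show n + (p + m) = m + n + p from by ring]
  rw [← Finsupp.single_add, ← Finsupp.single_add]
  congr 1
  simp only [Jval, map_sub, map_smul, LinearMap.sub_apply, LinearMap.smul_apply]
  push_cast
  module

end Aux

/-- The bracket makes `L(A)` a Lie algebra (antisymmetry and the Jacobi identity hold)
if and only if `A` is a Novikov algebra. -/
theorem stmt0 {A : Type*} [AddCommGroup A] [Module ℂ A]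
    (q : ℂ) (mul : A →ₗ[ℂ] A →ₗ[ℂ] A) :
    ((∀ f g : ℤ →₀ A, affBracket q mul f g = - affBracket q mul g f) ∧
      (∀ f g h : ℤ →₀ A,
        affBracket q mul f (affBracket q mul g h) +
          affBracket q mul h (affBracket q mul f g) +
          affBracket q mul g (affBracket q mul h f) = 0)) ↔
    ((∀ a b c : A,
        mul (mul a b) c - mul a (mul b c) = mul (mul b a) c - mul b (mul a c)) ∧
      (∀ a b c : A, mul (mul a b) c = mul (mul a c) b)) := by
  constructor
  · rintro ⟨-, hjac⟩
    have hJ : ∀ (m n p : ℤ) (a b c : A), Jval q mul (m : ℂ) (n : ℂ) (p : ℂ) a b c = 0 := by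
      intro m n p a b c
      have h := hjac (Finsupp.single m a) (Finsupp.single n b) (Finsupp.single p c)
      rw [aff_triple] at h
      exact Finsupp.single_eq_zero.mp h
    constructor
    · intro a b c
      have h00 := hJ 0 0 0 a b c
      have h10 := hJ 1 0 0 a b c
      have h01 := hJ 0 1 0 a b c
      have h11 := hJ 1 1 0 a b c
      simp only [Jval] at h00 h10 h01 h11
      push_cast at h00 h10 h01 h11
      linear_combination (norm := module) -h11 + h10 + h01 - h00
    · intro a b c
      have h0 := hJ 0 0 0 a b c
      have h1 := hJ 1 0 0 a b c
      have h2 := hJ 2 0 0 a b c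
      simp only [Jval] at h0 h1 h2
      push_cast at h0 h1 h2
      linear_combination (norm := module) (-(2⁻¹ : ℂ)) • h2 + h1 + (-(2⁻¹ : ℂ)) • h0
  · rintro ⟨hls, hrc⟩
    constructor
    · intro f g
      induction f using Finsupp.induction_linear generalizing g with
      | zero => simp [aff_zero_left, aff_zero_right]
      | add f₁ f₂ ih₁ ih₂ =>
          rw [aff_add_left, ih₁ g, ih₂ g, aff_add_right]
          abel
      | single m a =>
          induction g using Finsupp.induction_linear with
          | zero => simp [aff_zero_left, aff_zero_right]
          | add g₁ g₂ ih₁ ih₂ =>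
              rw [aff_add_right, ih₁, ih₂, aff_add_left]
              abel
          | single n b =>
              rw [aff_single_single, aff_single_single, add_comm n m, ← Finsupp.single_neg]
              congr 1
              module
    · intro f g h
      induction f using Finsupp.induction_linear generalizing g h with
      | zero => simp [aff_zero_left, aff_zero_right]
      | add f₁ f₂ ih₁ ih₂ =>
          rw [aff_add_left, aff_add_left, aff_add_right, aff_add_right, aff_add_right]
          linear_combination (norm := module) ih₁ g h + ih₂ g h
      | single m a =>
          induction g using Finsupp.induction_linear generalizing h with
          | zero => simp [aff_zero_left, aff_zero_right]
          | add g₁ g₂ ih₁ ih₂ =>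
              rw [aff_add_left, aff_add_right, aff_add_right, aff_add_right, aff_add_left]
              linear_combination (norm := module) ih₁ h + ih₂ h
          | single n b =>
              induction h using Finsupp.induction_linear with
              | zero => simp [aff_zero_left, aff_zero_right]
              | add h₁ h₂ ih₁ ih₂ =>
                  rw [aff_add_right, aff_add_right, aff_add_left, aff_add_left, aff_add_right]
                  linear_combination (norm := module) ih₁ + ih₂
              | single p c =>
                  rw [aff_triple, Finsupp.single_eq_zero]
                  simp only [Jval]
                  linear_combination (norm := module)
                    (-((n : ℂ)+q)*((m : ℂ)+q)) • hls a b c +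
                    (-((p : ℂ)+q)*((n : ℂ)+q)) • hls b c a +
                    (-((m : ℂ)+q)*((p : ℂ)+q)) • hls c a b +
                    ((m : ℂ)*((m : ℂ)+q)) • hrc a c b +
                    ((n : ℂ)*((n : ℂ)+q)) • hrc b a c +
                    ((p : ℂ)*((p : ℂ)+q)) • hrc c b a
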